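/- Let α be a nonzero algebraic number, R a complete residue system mod α in ℤ[α], and J the associated backward division map. Then the following are equivalent: (i) ℤ[α] = R[α] and 0 ∈ R; (ii) for every β ∈ ℤ[α] the sequence (J^{(n)}(β))_{n≥0} is eventually periodic and ℘ = {0}. -/

import Mathlib

open Polynomial

/-- `ℤ[α]`: the set of values `P(α)` for `P ∈ ℤ[x]`. -/
def Zadj (α : ℂ) : Set ℂ := {z | ∃ P : ℤ[X], aeval α P = z}

/-- `F[α]`: the set of all sums `Σ_{j=0}^{n} f_j α^j` with `n ∈ ℕ` and `f_0, …, f_n ∈ F`. -/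
def repSet (α : ℂ) (F : Set ℂ) : Set ℂ :=
  {z | ∃ (n : ℕ) (f : ℕ → ℂ), (∀ j ≤ n, f j ∈ F) ∧
    z = ∑ j ∈ Finset.range (n + 1), f j * α ^ j}

/-- `R` is a complete residue system mod `α` in `ℤ[α]`: `R ⊆ ℤ[α]` and every `β ∈ ℤ[α]`
is congruent modulo the ideal `αℤ[α]` to exactly one element of `R`. -/
def IsCRS (α : ℂ) (R : Set ℂ) : Prop :=
  R ⊆ Zadj α ∧ ∀ β ∈ Zadj α, ∃! r, r ∈ R ∧ ∃ γ ∈ Zadj α, β - r = α * γ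

/-- `J` is the backward division map associated to the CRS `R`:
for every `β ∈ ℤ[α]`, `J β ∈ ℤ[α]` and `β = r + α · J β` for some `r ∈ R`. -/
def IsJmap (α : ℂ) (R : Set ℂ) (J : ℂ → ℂ) : Prop :=
  ∀ β ∈ Zadj α, J β ∈ Zadj α ∧ ∃ r ∈ R, β = r + α * J β

/-- `℘`: the set of periodic elements of `ℤ[α]` under `J`. -/
def perSet (α : ℂ) (J : ℂ → ℂ) : Set ℂ :=
  {β ∈ Zadj α | ∃ n : ℕ, 1 ≤ n ∧ J^[n] β = β}

/-- The orbit of `β` under `J` is eventually periodic. -/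
def EvPeriodic (J : ℂ → ℂ) (β : ℂ) : Prop :=
  ∃ (k m : ℕ), 1 ≤ m ∧ J^[k + m] β = J^[k] β

lemma Zadj_zero (α : ℂ) : (0:ℂ) ∈ Zadj α := ⟨0, by simp⟩

lemma Zadj_add {α x y : ℂ} (hx : x ∈ Zadj α) (hy : y ∈ Zadj α) : x + y ∈ Zadj α := by
  obtain ⟨P, hP⟩ := hx; obtain ⟨Q, hQ⟩ := hy
  exact ⟨P + Q, by simp [hP, hQ]⟩

lemma Zadj_mul {α x y : ℂ} (hx : x ∈ Zadj α) (hy : y ∈ Zadj α) : x * y ∈ Zadj α := by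
  obtain ⟨P, hP⟩ := hx; obtain ⟨Q, hQ⟩ := hy
  exact ⟨P * Q, by simp [hP, hQ]⟩

lemma Zadj_pow (α : ℂ) (j : ℕ) : α ^ j ∈ Zadj α := ⟨X ^ j, by simp⟩

lemma Zadj_sum {α : ℂ} {s : Finset ℕ} {g : ℕ → ℂ} (h : ∀ j ∈ s, g j ∈ Zadj α) :
    (∑ j ∈ s, g j) ∈ Zadj α := by
  classical
  induction s using Finset.induction with
  | empty => simpa using Zadj_zero α
  | insert _ _ hn ih =>
    rw [Finset.sum_insert hn]
    exact Zadj_add (h _ (Finset.mem_insert_self _ _))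
      (ih fun j hj => h j (Finset.mem_insert_of_mem hj))

/-- Key uniqueness step: if `β = r + α γ` with `r ∈ R`, `γ ∈ ℤ[α]`, then `J β = γ`. -/
lemma Jstep {α : ℂ} (h0 : α ≠ 0) {R : Set ℂ} (hR : IsCRS α R) {J : ℂ → ℂ}
    (hJ : IsJmap α R J) {β r γ : ℂ} (hβ : β ∈ Zadj α) (hr : r ∈ R) (hγ : γ ∈ Zadj α)
    (heq : β = r + α * γ) : J β = γ := by
  obtain ⟨hJβ, r', hr', heq'⟩ := hJ β hβ
  obtain ⟨r₀, -, huniq⟩ := hR.2 β hβ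
  have h1 : r' = r₀ := huniq r' ⟨hr', J β, hJβ, by linear_combination heq'⟩
  have h2 : r = r₀ := huniq r ⟨hr, γ, hγ, by linear_combination heq⟩
  have : α * γ = α * J β := by rw [h2, ← h1] at heq; linear_combination heq' - heq
  exact (mul_left_cancel₀ h0 this).symm

lemma shift_sum (α : ℂ) (n : ℕ) (f : ℕ → ℂ) :
    ∑ j ∈ Finset.range (n + 2), f j * α ^ j
      = f 0 + α * ∑ j ∈ Finset.range (n + 1), f (j + 1) * α ^ j := by
  rw [Finset.sum_range_succ' (fun j => f j * α ^ j) (n + 1), Finset.mul_sum]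
  have : ∀ j, f (j + 1) * α ^ (j + 1) = α * (f (j + 1) * α ^ j) := fun j => by ring
  simp_rw [this]
  ring

/-- Corollary 1: `(α, R)` is a number system (i.e. `ℤ[α] = R[α]` and `0 ∈ R`) if and only
if every orbit of `J` is eventually periodic and `℘ = {0}`. -/
theorem number_system_iff_perSet_zero (α : ℂ) (hα : IsAlgebraic ℚ α) (h0 : α ≠ 0)
    (R : Set ℂ) (hR : IsCRS α R) (J : ℂ → ℂ) (hJ : IsJmap α R J) :
    (repSet α R = Zadj α ∧ (0 : ℂ) ∈ R) ↔
      ((∀ β ∈ Zadj α, EvPeriodic J β) ∧ perSet α J = {0}) := by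
  -- J preserves Zadj, and iterates preserve Zadj
  have hJZ : ∀ β ∈ Zadj α, J β ∈ Zadj α := fun β hβ => (hJ β hβ).1
  have hJZn : ∀ (n : ℕ) (β), β ∈ Zadj α → J^[n] β ∈ Zadj α := by
    intro n
    induction n with
    | zero => intro β hβ; simpa using hβ
    | succ n ih =>
      intro β hβ
      rw [Function.iterate_succ_apply]
      exact ih _ (hJZ β hβ)
  constructor
  · rintro ⟨hrep, h0R⟩
    -- J 0 = 0
    have hJ0 : J 0 = 0 :=
      Jstep h0 hR hJ (Zadj_zero α) h0R (Zadj_zero α) (by ring)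
    have hJ0n : ∀ n : ℕ, J^[n] (0:ℂ) = 0 := fun n => Function.iterate_fixed hJ0 n
    -- orbits of representable elements reach 0
    have key : ∀ (n : ℕ) (f : ℕ → ℂ), (∀ j ≤ n, f j ∈ R) →
        J^[n + 1] (∑ j ∈ Finset.range (n + 1), f j * α ^ j) = 0 := by
      intro n
      induction n with
      | zero =>
        intro f hf
        have hf0 : f 0 ∈ R := hf 0 le_rfl
        have : (∑ j ∈ Finset.range 1, f j * α ^ j) = f 0 := by simp
        rw [this, Function.iterate_one]
        exact Jstep h0 hR hJ (hR.1 hf0) hf0 (Zadj_zero α) (by ring)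
      | succ n ih =>
        intro f hf
        set γ := ∑ j ∈ Finset.range (n + 1), f (j + 1) * α ^ j with hγdef
        have hγZ : γ ∈ Zadj α := Zadj_sum fun j hj =>
          Zadj_mul (hR.1 (hf (j + 1) (Finset.mem_range.mp hj)))
            (Zadj_pow α j)
        have hβZ : (∑ j ∈ Finset.range (n + 2), f j * α ^ j) ∈ Zadj α :=
          Zadj_sum fun j hj =>
            Zadj_mul (hR.1 (hf j (Nat.lt_succ_iff.mp (Finset.mem_range.mp hj)))) (Zadj_pow α j)
        have hJβ : J (∑ j ∈ Finset.range (n + 2), f j * α ^ j) = γ :=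
          Jstep h0 hR hJ hβZ (hf 0 (Nat.zero_le _)) hγZ (shift_sum α n f)
        rw [Function.iterate_succ_apply, hJβ]
        exact ih (fun j => f (j + 1)) fun j hj => hf (j + 1) (by omega)
    have reach0 : ∀ β ∈ Zadj α, ∃ N, J^[N] β = 0 := by
      intro β hβ
      rw [← hrep] at hβ
      obtain ⟨n, f, hf, rfl⟩ := hβ
      exact ⟨n + 1, key n f hf⟩
    constructor
    · intro β hβ
      obtain ⟨N, hN⟩ := reach0 β hβ
      refine ⟨N, 1, le_rfl, ?_⟩
      rw [Function.iterate_succ_apply', hN, hJ0]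
    · ext β
      constructor
      · rintro ⟨hβ, p, hp1, hper⟩
        obtain ⟨N, hN⟩ := reach0 β hβ
        have hle : N ≤ p * N + p := by nlinarith [Nat.one_le_iff_ne_zero.mp hp1]
        have hfix : J^[p * N + p] β = β := by
          have : p * N + p = p * (N + 1) := by ring
          rw [this, Function.iterate_mul]
          exact Function.iterate_fixed hper (N + 1)
        have : J^[p * N + p] β = 0 := by
          obtain ⟨d, hd⟩ := Nat.exists_eq_add_of_le hle
          rw [hd, add_comm N d, Function.iterate_add_apply, hN, hJ0n]
        simp only [Set.mem_singleton_iff]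
        rw [← hfix, this]
      · rintro rfl
        exact ⟨Zadj_zero α, 1, le_rfl, by simpa using hJ0⟩
  · rintro ⟨hev, hper⟩
    -- first, 0 ∈ R
    have h0P : (0:ℂ) ∈ perSet α J := by rw [hper]; rfl
    obtain ⟨-, p, hp1, hp⟩ := h0P
    have hJ0per : J 0 ∈ perSet α J := by
      refine ⟨hJZ 0 (Zadj_zero α), p, hp1, ?_⟩
      rw [← Function.iterate_succ_apply, Function.iterate_succ_apply', hp]
    have hJ0 : J 0 = 0 := by rw [hper] at hJ0per; exact hJ0per
    have h0R : (0:ℂ) ∈ R := by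
      obtain ⟨-, r, hr, heq⟩ := hJ 0 (Zadj_zero α)
      rw [hJ0] at heq
      have : r = 0 := by linear_combination -heq
      rwa [← this]
    have hJ0n : ∀ n : ℕ, J^[n] (0:ℂ) = 0 := fun n => Function.iterate_fixed hJ0 n
    -- every element of Zadj reaches 0
    have reach0 : ∀ β ∈ Zadj α, ∃ N, J^[N] β = 0 := by
      intro β hβ
      obtain ⟨k, m, hm1, hkm⟩ := hev β hβ
      have : J^[k] β ∈ perSet α J := by
        refine ⟨hJZn k β hβ, m, hm1, ?_⟩
        rw [← Function.iterate_add_apply, add_comm m k, hkm]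
      rw [hper] at this
      exact ⟨k, this⟩
    -- unwinding: reaching 0 implies representable
    have unwind : ∀ (N : ℕ) (β), β ∈ Zadj α → J^[N] β = 0 → β ∈ repSet α R := by
      intro N
      induction N with
      | zero =>
        intro β hβ hN
        simp only [Function.iterate_zero, id_eq] at hN
        subst hN
        exact ⟨0, fun _ => 0, fun j _ => h0R, by simp⟩
      | succ N ih =>
        intro β hβ hN
        obtain ⟨hJβZ, r, hr, heq⟩ := hJ β hβ
        rw [Function.iterate_succ_apply] at hN
        obtain ⟨n, f, hf, hrep⟩ := ih (J β) hJβZ hN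
        refine ⟨n + 1, fun j => if j = 0 then r else f (j - 1), ?_, ?_⟩
        · intro j hj
          cases j with
          | zero => simpa using hr
          | succ j => simpa using hf j (by omega)
        · rw [heq, hrep, shift_sum α n (fun j => if j = 0 then r else f (j - 1))]
          simp
    refine ⟨?_, h0R⟩
    ext β
    constructor
    · rintro ⟨n, f, hf, rfl⟩
      exact Zadj_sum fun j hj =>
        Zadj_mul (hR.1 (hf j (Nat.lt_succ_iff.mp (Finset.mem_range.mp hj)))) (Zadj_pow α j)
    · intro hβ
      obtain ⟨N, hN⟩ := reach0 β hβ
      exact unwind N β hβ hN
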